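/- arXiv:1304.5530 — 2 statements merged into one kernel-verified Lean document; each statement's English description precedes it below -/
import Mathlib

section
/- Let p_1,…,p_n > 0 with Σ_i p_i = 1, and suppose f attains its minimum value f* and satisfies the strong convexity inequality f(y) ≥ f(x) + ⟨∇f(x), y − x⟩ + (μ/2) Σ_i (L_i/p_i)‖y_i − x_i‖² for all x, y ∈ E, with μ > 0. Let x ∈ E, let δ = (δ_1,…,δ_n) with δ_i ≥ 0, and let T = (T_1,…,T_n) ∈ E satisfy, for each i, ⟨∇_i f(x), T_i⟩ + (L_i/2)‖T_i‖² ≤ min{ 0, δ_i + inf_{s ∈ E_i}(⟨∇_i f(x), s⟩ + (L_i/2)‖s‖²) }. Then Σ_{i=1}^n p_i · f(x + U_i T_i) − f* ≤ (1 − μ)(f(x) − f*) + Σ_{i=1}^n p_i δ_i. -/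
open scoped RealInnerProductSpace
open MeasureTheory

noncomputable section

variable {n : ℕ} {E : Fin n → Type*} [∀ i, NormedAddCommGroup (E i)]
  [∀ i, InnerProductSpace ℝ (E i)] [∀ i, FiniteDimensional ℝ (E i)]

/-- `U i t`: embedding of the `i`-th block into the product space. -/
def blockEmbed (i : Fin n) (t : E i) : PiLp 2 E :=
  (WithLp.equiv 2 (∀ j, E j)).symm (Pi.single i t)

/-- `V_i(x,t)` in the smooth case (`Ψ ≡ 0`). -/
def ViSmooth (f : PiLp 2 E → ℝ) (L : Fin n → ℝ)
    (x : PiLp 2 E) (i : Fin n) (t : E i) : ℝ :=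
  ⟪(gradient f x) i, t⟫ + L i / 2 * ‖t‖ ^ 2

lemma inner_blockEmbed (g : PiLp 2 E) (i : Fin n) (t : E i) :
    ⟪g, blockEmbed i t⟫ = ⟪g i, t⟫ := by
  simp only [blockEmbed, PiLp.inner_apply]
  rw [Finset.sum_eq_single i]
  · simp
  · intro j _ hj; simp [Pi.single_eq_of_ne hj]
  · simp

lemma blockEmbed_smul (i : Fin n) (τ : ℝ) (t : E i) :
    blockEmbed i (τ • t) = τ • blockEmbed (E := E) i t := by
  simp [blockEmbed, Pi.single_smul]

lemma fderiv_eq_inner_gradient (f : PiLp 2 E → ℝ) (hf : Differentiable ℝ f)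
    (y v : PiLp 2 E) : fderiv ℝ f y v = ⟪gradient f y, v⟫ := by
  have := (hf y).hasGradientAt
  rw [hasGradientAt_iff_hasFDerivAt] at this
  rw [this.fderiv]
  simp [InnerProductSpace.toDual]

lemma descent (L : Fin n → ℝ)
    (f : PiLp 2 E → ℝ) (hfdiff : Differentiable ℝ f)
    (hLip : ∀ (x : PiLp 2 E) (i : Fin n) (t : E i),
      ‖(gradient f (x + blockEmbed i t)) i - (gradient f x) i‖ ≤ L i * ‖t‖)
    (x : PiLp 2 E) (i : Fin n) (t : E i) :
    f (x + blockEmbed i t) ≤ f x + ViSmooth f L x i t := by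
  set c : PiLp 2 E := blockEmbed i t with hc
  set a : ℝ := ⟪(gradient f x) i, t⟫ with ha
  set b : ℝ := L i * ‖t‖ ^ 2 with hb
  set D : ℝ → ℝ := fun τ => f x + τ * a + b * τ ^ 2 / 2 - f (x + τ • c) with hD
  have hpath : ∀ τ : ℝ, HasDerivAt (fun s : ℝ => x + s • c) c τ := fun τ => by
    simpa using ((hasDerivAt_id τ).smul_const c).const_add x
  have hDd : ∀ τ : ℝ, HasDerivAt D
      (a + b * τ - ⟪gradient f (x + τ • c), c⟫) τ := by
    intro τ
    have h1 : HasDerivAt (fun s : ℝ => f (x + s • c)) (⟪gradient f (x + τ • c), c⟫) τ := by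
      have := (hfdiff (x + τ • c)).hasFDerivAt.comp_hasDerivAt τ (hpath τ)
      rw [fderiv_eq_inner_gradient f hfdiff] at this
      exact this
    have h2 : HasDerivAt (fun τ : ℝ => f x + τ * a + b * τ ^ 2 / 2)
        (a + b * τ) τ := by
      have := (((hasDerivAt_id τ).mul_const a).const_add (f x)).add
        ((((hasDerivAt_id τ).pow 2).const_mul b).div_const 2)
      exact this.congr_deriv (by norm_num [id]; ring)
    exact h2.sub h1
  have hmono : MonotoneOn D (Set.Icc 0 1) := by
    apply monotoneOn_of_deriv_nonneg (convex_Icc 0 1)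
      (Continuous.continuousOn (continuous_iff_continuousAt.2 fun τ => (hDd τ).continuousAt))
      (fun τ _ => (hDd τ).differentiableAt.differentiableWithinAt)
    intro τ hτ
    rw [interior_Icc] at hτ
    rw [(hDd τ).deriv]
    have key : ‖(gradient f (x + τ • c)) i - (gradient f x) i‖ ≤ L i * (τ * ‖t‖) := by
      have := hLip x i (τ • t)
      rw [blockEmbed_smul] at this
      rwa [norm_smul, Real.norm_eq_abs, abs_of_pos hτ.1] at this
    have hic : ⟪gradient f (x + τ • c), c⟫ = ⟪(gradient f (x + τ • c)) i, t⟫ :=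
      inner_blockEmbed _ i t
    have hdiff : ⟪(gradient f (x + τ • c)) i - (gradient f x) i, t⟫ ≤ L i * (τ * ‖t‖) * ‖t‖ :=
      le_trans (real_inner_le_norm _ _) (by
        exact mul_le_mul_of_nonneg_right key (norm_nonneg t))
    rw [inner_sub_left] at hdiff
    rw [hic]
    simp only [ha, hb]
    nlinarith [hdiff]
  have h01 : D 0 ≤ D 1 := hmono (by norm_num) (by norm_num) (by norm_num)
  simp only [hD] at h01
  simp only [ViSmooth]
  rw [show (1:ℝ) • c = c from one_smul ℝ c] at h01
  simp at h01
  nlinarith [h01]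

/-- Smooth strongly convex case: one-step expected linear decrease,
`Σ_i p_i f (x + U_i T_i) − f* ≤ (1 − μ)(f x − f*) + Σ_i p_i δ_i`. -/
theorem smooth_strongly_convex_decrease
    (hn : 0 < n)
    (L : Fin n → ℝ) (hL : ∀ i, 0 < L i)
    (f : PiLp 2 E → ℝ) (hfdiff : Differentiable ℝ f) (hfconv : ConvexOn ℝ Set.univ f)
    (hLip : ∀ (x : PiLp 2 E) (i : Fin n) (t : E i),
      ‖(gradient f (x + blockEmbed i t)) i - (gradient f x) i‖ ≤ L i * ‖t‖)
    (p : Fin n → ℝ) (hp : ∀ i, 0 < p i) (hpsum : ∑ i, p i = 1)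
    (fstar : ℝ) (xstar : PiLp 2 E) (hstar : f xstar = fstar) (hmin : ∀ y, fstar ≤ f y)
    (μ : ℝ) (hμ : 0 < μ)
    (hsc : ∀ x y : PiLp 2 E,
      f x + ⟪gradient f x, y - x⟫ + μ / 2 * ∑ i, L i / p i * ‖y i - x i‖ ^ 2 ≤ f y)
    (x : PiLp 2 E) (δ : Fin n → ℝ) (hδ : ∀ i, 0 ≤ δ i)
    (T : PiLp 2 E)
    (hT : ∀ i, ViSmooth f L x i (T i) ≤ min 0 (δ i + ⨅ s : E i, ViSmooth f L x i s)) :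
    ∑ i, p i * f (x + blockEmbed i (T i)) - fstar ≤
      (1 - μ) * (f x - fstar) + ∑ i, p i * δ i := by
  set g : PiLp 2 E := gradient f x with hg
  set s : ∀ i, E i := fun i => (μ / p i) • (xstar i - x i) with hs
  -- lower bound for ViSmooth, so the infimum exists
  have hbdd : ∀ i, BddBelow (Set.range (ViSmooth f L x i)) := by
    intro i
    refine ⟨-(‖g i‖ ^ 2 / (2 * L i)), ?_⟩
    rintro _ ⟨u, rfl⟩
    simp only [ViSmooth, ← hg]
    have h1 : -(‖g i‖ * ‖u‖) ≤ ⟪g i, u⟫ := neg_le_of_neg_le (by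
      have := abs_real_inner_le_norm (g i) u
      have := neg_abs_le (⟪g i, u⟫ : ℝ)
      linarith)
    have hLi := hL i
    have h0 : 0 ≤ (L i * ‖u‖ - ‖g i‖) ^ 2 / (2 * L i) :=
      div_nonneg (sq_nonneg _) (by linarith)
    have hexp : (L i * ‖u‖ - ‖g i‖) ^ 2 / (2 * L i) =
        L i / 2 * ‖u‖ ^ 2 - ‖g i‖ * ‖u‖ + ‖g i‖ ^ 2 / (2 * L i) := by
      field_simp
      ring
    linarith [h0, h1, hexp.symm.le]
  have hinf : ∀ i, (⨅ u : E i, ViSmooth f L x i u) ≤ ViSmooth f L x i (s i) :=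
    fun i => ciInf_le (hbdd i) (s i)
  have hVT : ∀ i, ViSmooth f L x i (T i) ≤ δ i + ViSmooth f L x i (s i) :=
    fun i => le_trans (le_trans (hT i) (min_le_right _ _))
      (add_le_add_right (hinf i) (δ i))
  have hdesc : ∀ i, f (x + blockEmbed i (T i)) ≤ f x + ViSmooth f L x i (T i) :=
    fun i => descent L f hfdiff hLip x i (T i)
  have h1 : ∑ i, p i * f (x + blockEmbed i (T i)) ≤
      ∑ i, p i * (f x + δ i + ViSmooth f L x i (s i)) := by
    refine Finset.sum_le_sum fun i _ => mul_le_mul_of_nonneg_left ?_ (hp i).le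
    have := hdesc i; have := hVT i; linarith
  have h2 : ∑ i, p i * (f x + δ i + ViSmooth f L x i (s i)) =
      f x + ∑ i, p i * δ i + ∑ i, p i * ViSmooth f L x i (s i) := by
    simp only [mul_add, Finset.sum_add_distrib, ← Finset.sum_mul, hpsum, one_mul]
  have hsum : ∑ i, p i * ViSmooth f L x i (s i) =
      μ * ⟪g, xstar - x⟫ + μ * (μ / 2 * ∑ i, L i / p i * ‖xstar i - x i‖ ^ 2) := by
    rw [PiLp.inner_apply, Finset.mul_sum, Finset.mul_sum, Finset.mul_sum,
      ← Finset.sum_add_distrib]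
    refine Finset.sum_congr rfl fun i _ => ?_
    have hpi := (hp i).ne'
    have hsub : (xstar - x) i = xstar i - x i := rfl
    simp only [ViSmooth, ← hg, hs, real_inner_smul_right, norm_smul, Real.norm_eq_abs,
      abs_of_pos (div_pos hμ (hp i)), mul_pow, hsub]
    field_simp
  have hsc' := hsc x xstar
  rw [hstar] at hsc'
  have h3 : μ * (f x + ⟪g, xstar - x⟫ + μ / 2 * ∑ i, L i / p i * ‖xstar i - x i‖ ^ 2) ≤
      μ * fstar := mul_le_mul_of_nonneg_left hsc' hμ.le
  nlinarith [h1, h2, hsum, h3]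
end
end

section
/- Let M ≥ N ≥ 1 and ℓ ≥ 1, let C be a real M × N matrix with rank(C) = N, and let D be a real ℓ × N matrix with r = rank(D). Set P = CᵀC (a symmetric positive definite matrix), B = CᵀC + DᵀD, and S = P^{−1/2} B P^{−1/2}, where P^{1/2} is the unique symmetric positive definite square root of P and P^{−1/2} is its inverse. Then S is symmetric, and counted with multiplicity: exactly N − r of the eigenvalues of S are equal to 1, and exactly r of the eigenvalues of S are strictly greater than 1. -/
open scoped Classical
open Matrix

/-- Auxiliary: spectrum of `S = 1 + K` for a real positive semidefinite `K`. -/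
lemma aux_one_add_posSemidef {n : ℕ} {K S : Matrix (Fin n) (Fin n) ℝ} (hK : K.PosSemidef)
    (hSK : S = 1 + K) (hS : S.IsHermitian) :
    (Finset.univ.filter fun i => hS.eigenvalues i = 1).card = n - K.rank ∧
    (Finset.univ.filter fun i => 1 < hS.eigenvalues i).card = K.rank := by
  subst hSK
  -- all eigenvalues are ≥ 1
  have hge : ∀ i, 1 ≤ hS.eigenvalues i := by
    intro i
    set v : Fin n → ℝ := ⇑(hS.eigenvectorBasis i) with hv
    have hmv : (1 + K) *ᵥ v = hS.eigenvalues i • v := hS.mulVec_eigenvectorBasis i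
    have hKv : K *ᵥ v = (hS.eigenvalues i - 1) • v := by
      have h1 : v + K *ᵥ v = hS.eigenvalues i • v := by
        rw [← hmv, add_mulVec, one_mulVec]
      have h2 : K *ᵥ v = hS.eigenvalues i • v - v := by
        rw [← h1]; abel
      rw [h2, sub_smul, one_smul]
    have hvne : v ≠ 0 := by
      intro h
      exact hS.eigenvectorBasis.orthonormal.ne_zero i (by ext j; exact congrFun h j)
    have hstar : star v = v := by ext j; simp
    have h0 : (0 : ℝ) ≤ star v ⬝ᵥ (K *ᵥ v) := hK.dotProduct_mulVec_nonneg v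
    rw [hKv, dotProduct_smul, hstar, smul_eq_mul] at h0
    have hposvv : 0 < v ⬝ᵥ v := by
      obtain ⟨j, hj⟩ := Function.ne_iff.mp hvne
      refine Finset.sum_pos' (fun k _ => mul_self_nonneg _) ⟨j, Finset.mem_univ _, ?_⟩
      exact mul_self_pos.mpr hj
    nlinarith
  -- rank of K equals the number of eigenvalues ≠ 1
  have hrank : (Finset.univ.filter fun i => hS.eigenvalues i ≠ 1).card = K.rank := by
    set U : Matrix (Fin n) (Fin n) ℝ := (hS.eigenvectorUnitary : Matrix (Fin n) (Fin n) ℝ)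
      with hU
    have hU1 : star U * U = 1 := Unitary.coe_star_mul_self hS.eigenvectorUnitary
    have hU1' : U * star U = 1 := Unitary.coe_mul_star_self hS.eigenvectorUnitary
    have hUdet : IsUnit U.det := by
      apply IsUnit.of_mul_eq_one (star U).det
      rw [← det_mul, hU1']; exact det_one
    have hUsdet : IsUnit (star U).det := by
      apply IsUnit.of_mul_eq_one U.det
      rw [← det_mul, hU1]; exact det_one
    have hspec : (1 : Matrix (Fin n) (Fin n) ℝ) + K
        = U * diagonal (RCLike.ofReal ∘ hS.eigenvalues) * star U := hS.spectral_theorem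
    have hKeq : K = U * diagonal (fun i => hS.eigenvalues i - 1) * star U := by
      have h1 : (1 : Matrix (Fin n) (Fin n) ℝ) = U * 1 * star U := by
        rw [Matrix.mul_one, hU1']
      have h2 : K = U * diagonal (RCLike.ofReal ∘ hS.eigenvalues) * star U - U * 1 * star U := by
        rw [← h1, ← hspec]; abel
      conv_lhs => rw [h2]
      rw [← Matrix.sub_mul, ← Matrix.mul_sub]
      congr 2
      ext i j
      rcases eq_or_ne i j with h | h <;>
        simp [h, Matrix.sub_apply, Matrix.diagonal_apply, Matrix.one_apply]
    have hrankK : K.rank = (Finset.univ.filter fun i => hS.eigenvalues i ≠ 1).card := by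
      conv_lhs => rw [hKeq]
      rw [rank_mul_eq_left_of_isUnit_det _ _ hUsdet,
        rank_mul_eq_right_of_isUnit_det _ _ hUdet, rank_diagonal, Fintype.card_subtype]
      congr 1
      ext i
      simp [sub_eq_zero]
    exact hrankK.symm
  constructor
  · have hsplit := Finset.card_filter_add_card_filter_not
      (s := (Finset.univ : Finset (Fin n))) (p := fun i => hS.eigenvalues i = 1)
    simp only [Finset.card_univ, Fintype.card_fin] at hsplit
    have h2 : (Finset.univ.filter fun i => ¬ hS.eigenvalues i = 1).card = K.rank := by
      simpa using hrank
    omega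
  · rw [← hrank]
    congr 1
    ext i
    simp only [Finset.mem_filter, Finset.mem_univ, true_and]
    constructor
    · exact fun h => ne_of_gt h
    · exact fun h => lt_of_le_of_ne (hge i) (Ne.symm h)

open scoped ComplexOrder in
/-- The positive semidefinite square root of a positive semidefinite matrix
(the definition Mathlib had before it was removed). -/
noncomputable def Matrix.PosSemidef.sqrt {n 𝕜 : Type*} [Fintype n] [RCLike 𝕜] [DecidableEq n]
    {A : Matrix n n 𝕜} (hA : A.PosSemidef) : Matrix n n 𝕜 :=
  hA.1.eigenvectorUnitary.1 * diagonal ((↑) ∘ Real.sqrt ∘ hA.1.eigenvalues) *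
  (star hA.1.eigenvectorUnitary : Matrix n n 𝕜)

lemma Matrix.PosSemidef.posSemidef_sqrt_isHermitian {n : Type*} [Fintype n] [DecidableEq n]
    {A : Matrix n n ℝ} (hA : A.PosSemidef) : hA.sqrt.IsHermitian := by
  simp only [Matrix.PosSemidef.sqrt, IsHermitian, conjTranspose_mul, diagonal_conjTranspose,
    star_eq_conjTranspose, conjTranspose_conjTranspose, Matrix.mul_assoc]
  congr 2

lemma Matrix.PosSemidef.sqrt_mul_self' {n : Type*} [Fintype n] [DecidableEq n]
    {A : Matrix n n ℝ} (hA : A.PosSemidef) : hA.sqrt * hA.sqrt = A := by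
  have hU : (star hA.1.eigenvectorUnitary : Matrix n n ℝ) * hA.1.eigenvectorUnitary.1 = 1 :=
    Unitary.coe_star_mul_self _
  have e : hA.sqrt * hA.sqrt = hA.1.eigenvectorUnitary.1 *
      (diagonal (RCLike.ofReal ∘ Real.sqrt ∘ hA.1.eigenvalues : n → ℝ) *
        ((star hA.1.eigenvectorUnitary : Matrix n n ℝ) * hA.1.eigenvectorUnitary.1) *
        diagonal (RCLike.ofReal ∘ Real.sqrt ∘ hA.1.eigenvalues : n → ℝ)) *
      (star hA.1.eigenvectorUnitary : Matrix n n ℝ) := by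
    simp only [Matrix.PosSemidef.sqrt, Matrix.mul_assoc]
  rw [e, hU, Matrix.mul_one, diagonal_mul_diagonal]
  conv_rhs => rw [hA.1.spectral_theorem, Unitary.conjStarAlgAut_apply]
  congr 2
  ext i j
  simp only [diagonal_apply, Function.comp_apply]
  split_ifs
  · simpa using Real.mul_self_sqrt (hA.eigenvalues_nonneg i)
  · rfl

/-- Spectrum of the preconditioned matrix `S = P^{-1/2} B P^{-1/2}` with `P = CᵀC` and
`B = CᵀC + DᵀD`: `S` is symmetric, `N − rank D` of its eigenvalues are equal to `1`, and
`rank D` of its eigenvalues are strictly greater than `1` (counted with multiplicity). -/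
theorem preconditioned_spectrum_tall
    {M N L : ℕ} (hMN : N ≤ M) (hN : 1 ≤ N) (hL : 1 ≤ L)
    (C : Matrix (Fin M) (Fin N) ℝ) (hC : C.rank = N)
    (D : Matrix (Fin L) (Fin N) ℝ)
    (hP : (Cᵀ * C).PosDef) :
    ((hP.posSemidef.sqrt)⁻¹ * (Cᵀ * C + Dᵀ * D) * (hP.posSemidef.sqrt)⁻¹).IsSymm ∧
    ∃ hS : ((hP.posSemidef.sqrt)⁻¹ * (Cᵀ * C + Dᵀ * D) *
        (hP.posSemidef.sqrt)⁻¹).IsHermitian,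
      (Finset.univ.filter fun i => hS.eigenvalues i = 1).card = N - D.rank ∧
      (Finset.univ.filter fun i => 1 < hS.eigenvalues i).card = D.rank := by
  set R := hP.posSemidef.sqrt with hR
  have hRH : R.IsHermitian := hP.posSemidef.posSemidef_sqrt_isHermitian
  have hRR : R * R = Cᵀ * C := hP.posSemidef.sqrt_mul_self'
  have hRdet : IsUnit R.det := by
    have h1 : IsUnit (R.det * R.det) := by
      rw [← det_mul, hRR]
      exact hP.det_pos.ne'.isUnit
    exact isUnit_of_mul_isUnit_left h1
  set Q := R⁻¹ with hQ
  have hQdet : IsUnit Q.det := R.isUnit_nonsing_inv_det hRdet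
  have hQH : Q.IsHermitian := hRH.inv
  have hQR : Q * R = 1 := nonsing_inv_mul R hRdet
  have hRQ : R * Q = 1 := mul_nonsing_inv R hRdet
  set K := Q * (Dᵀ * D) * Q with hKdef
  have key : Q * (Cᵀ * C + Dᵀ * D) * Q = 1 + K := by
    rw [Matrix.mul_add, Matrix.add_mul]
    congr 1
    rw [← hRR, ← Matrix.mul_assoc, hQR, Matrix.one_mul, hRQ]
  have hDQ : (D * Q)ᴴ = Qᵀ * Dᵀ := by
    rw [conjTranspose_mul, conjTranspose_eq_transpose_of_trivial,
      conjTranspose_eq_transpose_of_trivial]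
  have hQt : Qᵀ = Q := by
    rw [← conjTranspose_eq_transpose_of_trivial]; exact hQH
  have hKeq : K = (D * Q)ᴴ * (D * Q) := by
    rw [hDQ, hQt, hKdef]
    simp [Matrix.mul_assoc]
  have hKpsd : K.PosSemidef := by
    rw [hKeq]; exact posSemidef_conjTranspose_mul_self (D * Q)
  have hKrank : K.rank = D.rank := by
    rw [hKeq, conjTranspose_eq_transpose_of_trivial, rank_transpose_mul_self,
      rank_mul_eq_left_of_isUnit_det _ _ hQdet]
  have hS : (Q * (Cᵀ * C + Dᵀ * D) * Q).IsHermitian := by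
    rw [key]
    exact Matrix.isHermitian_one.add hKpsd.1
  refine ⟨?_, hS, ?_⟩
  · have h : _ᴴ = _ := hS
    rw [conjTranspose_eq_transpose_of_trivial] at h
    exact h
  · have h := aux_one_add_posSemidef hKpsd key hS
    rw [hKrank] at h
    exact h
end
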